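/- arXiv:2006.02654 — 2 statements merged into one kernel-verified Lean document; each statement's English description precedes it below -/
import Mathlib

section
/- Let F be a field and let λ ∈ F be nonzero. Consider F^n (n ≥ 1), the direct sum of n copies of F with componentwise multiplication. Then rb_λ(F^n) = n; that is: (i) every Rota–Baxter operator R of weight λ on F^n satisfies R^k ∘ (R + λ·id)^{n−k} = 0 for some 0 ≤ k ≤ n, and (ii) there exists a Rota–Baxter operator R of weight λ on F^n such that for every k with 0 ≤ k ≤ n−1, R^k ∘ (R + λ·id)^{(n−1)−k} ≠ 0. -/
open Matrix Finset Module Polynomial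

/-- If the entries of a matrix satisfy the Rota–Baxter relations on the standard
idempotents, the associated operator is a Rota–Baxter operator of weight `lam`. -/
private lemma rb_of_entries {R : Type*} [CommRing R] {n : ℕ} (lam : R)
    (A : Matrix (Fin n) (Fin n) R)
    (h : ∀ i j k, A k i * A k j
      = A j i * A k j + A i j * A k i + (if i = j then lam * A k i else 0)) :
    ∀ x y : Fin n → R, A.mulVec x * A.mulVec y =
      A.mulVec (A.mulVec x * y + x * A.mulVec y + lam • (x * y)) := by
  intro x y
  funext k
  simp only [Pi.mul_apply, Matrix.mulVec, dotProduct, Pi.add_apply, Pi.smul_apply,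
    smul_eq_mul, mul_add, Finset.sum_add_distrib, Finset.mul_sum, Finset.sum_mul,
    Finset.sum_mul_sum]
  rw [Finset.sum_comm (f := fun j i => A k j * (x j * (A j i * y i)))]
  have h3 : ∀ j ∈ Finset.univ (α := Fin n), A k j * (lam * (x j * y j))
      = ∑ i, (if i = j then lam * A k i else 0) * (x i * y j) := by
    intro j _
    simp only [ite_mul, zero_mul, Finset.sum_ite_eq', Finset.mem_univ, if_true]
    ring
  rw [Finset.sum_congr rfl h3]
  rw [← Finset.sum_add_distrib, ← Finset.sum_add_distrib]
  refine Finset.sum_congr rfl fun j _ => ?_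
  rw [← Finset.sum_add_distrib, ← Finset.sum_add_distrib]
  refine Finset.sum_congr rfl fun i _ => ?_
  linear_combination (x i * y j) * h i j k

/-- Conversely, a Rota–Baxter operator's matrix entries satisfy those relations. -/
private lemma entries_of_rb {R : Type*} [CommRing R] {n : ℕ} (lam : R)
    (A : Matrix (Fin n) (Fin n) R)
    (h : ∀ x y : Fin n → R, A.mulVec x * A.mulVec y =
      A.mulVec (A.mulVec x * y + x * A.mulVec y + lam • (x * y))) :
    ∀ i j k, A k i * A k j
      = A j i * A k j + A i j * A k i + (if i = j then lam * A k i else 0) := by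
  intro i j k
  have harg : A.mulVec (Pi.single i 1) * Pi.single j 1 + Pi.single i 1 * A.mulVec (Pi.single j 1)
      + lam • (Pi.single i (1:R) * Pi.single j 1)
      = Pi.single j (A j i) + Pi.single i (A i j) + (if i = j then Pi.single i lam else 0) := by
    funext l
    by_cases hij : i = j
    · subst hij
      simp only [if_pos rfl, Matrix.mulVec_single, Pi.add_apply, Pi.mul_apply, Pi.smul_apply,
        Pi.single_apply, smul_eq_mul]
      by_cases hli : l = i
      · subst hli; simp
      · simp [hli]
    · rw [if_neg hij]
      simp only [Matrix.mulVec_single, Pi.add_apply, Pi.mul_apply, Pi.smul_apply,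
        Pi.single_apply, smul_eq_mul, Pi.zero_apply]
      by_cases hli : l = i
      · subst hli
        simp [hij, Ne.symm hij]
      · by_cases hlj : l = j
        · subst hlj; simp [hli]
        · simp [hli, hlj]
  have h1 := congrFun (h (Pi.single i 1) (Pi.single j 1)) k
  rw [harg] at h1
  rw [Matrix.mulVec_add, Matrix.mulVec_add, Matrix.mulVec_single, Matrix.mulVec_single,
    apply_ite A.mulVec, Matrix.mulVec_single, Matrix.mulVec_zero] at h1
  simp only [Matrix.mulVec_single, Pi.mul_apply, Pi.add_apply, mul_one,
    apply_ite (fun v : Fin n → R => v k), Pi.zero_apply, Pi.smul_apply, op_smul_eq_mul,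
    Matrix.col_apply] at h1
  by_cases hij : i = j
  · subst hij
    rw [if_pos rfl] at h1 ⊢
    linear_combination h1
  · rw [if_neg hij] at h1 ⊢
    linear_combination h1

/-- Eigenvalues of a Rota–Baxter operator of nonzero weight `lam` on `K^n` lie in `{0, -lam}`. -/
private lemma eigen_mem {K : Type*} [Field K] {n : ℕ} (lam : K) (hlam : lam ≠ 0)
    (R : Module.End K (Fin n → K))
    (hR : ∀ x y : Fin n → K, R x * R y = R (R x * y + x * R y + lam • (x * y)))
    (μ : K) (hμ : R.HasEigenvalue μ) : μ = 0 ∨ μ = -lam := by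
  by_contra hcon
  push_neg at hcon
  obtain ⟨hμ0, hμlam⟩ := hcon
  have hμl : μ + lam ≠ 0 := fun h => hμlam (eq_neg_of_add_eq_zero_left h)
  obtain ⟨v, hv⟩ := hμ.exists_hasEigenvector
  have hvpow : ∀ k : ℕ, 1 ≤ k → v ^ k ≠ 0 := by
    intro k hk hzero
    obtain ⟨i, hi⟩ := Function.ne_iff.mp hv.2
    have h2 : (v ^ k) i = 0 := by rw [hzero]; rfl
    rw [Pi.pow_apply] at h2
    exact hi (pow_eq_zero_iff (n := k) (by omega) |>.mp h2)
  set q : K := (μ + lam) / μ with hq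
  have hq0 : q ≠ 0 := div_ne_zero hμl hμ0
  have hμq : μ * q = μ + lam := by rw [hq]; field_simp
  have main : ∀ k : ℕ, 1 ≤ k → q ^ k ≠ 1 ∧ R (v ^ k) = (lam / (q ^ k - 1)) • v ^ k := by
    intro k hk
    induction k with
    | zero => omega
    | succ k ih =>
      rcases Nat.eq_zero_or_pos k with rfl | hk1
      · have hqne : q ≠ 1 := by
          intro h1
          have h2 := hμq
          rw [h1, mul_one] at h2
          exact hlam (by linear_combination -h2)
        refine ⟨by rwa [pow_one], ?_⟩
        have hq1 : q - 1 ≠ 0 := sub_ne_zero.mpr hqne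
        have hlq : lam / (q ^ 1 - 1) = μ := by
          rw [pow_one, eq_comm, eq_div_iff hq1]
          linear_combination hμq
        rw [hlq, pow_one]
        exact hv.apply_eq_smul
      · obtain ⟨hqk, hRk⟩ := ih hk1
        have hD : q ^ k - 1 ≠ 0 := sub_ne_zero.mpr hqk
        set μk : K := lam / (q ^ k - 1) with hμk
        have hμk0 : μk ≠ 0 := div_ne_zero hlam hD
        have hμkD : μk * (q ^ k - 1) = lam := div_mul_cancel₀ lam hD
        have hrb := hR v (v ^ k)
        rw [hv.apply_eq_smul, hRk] at hrb
        have hlhs : (μ • v) * (μk • v ^ k) = (μ * μk) • v ^ (k+1) := by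
          rw [smul_mul_assoc, mul_smul_comm, smul_smul, pow_succ']
        have hrhs : (μ • v) * v ^ k + v * (μk • v ^ k) + lam • (v * v ^ k)
            = (μ + μk + lam) • v ^ (k+1) := by
          rw [smul_mul_assoc, mul_smul_comm, ← pow_succ', add_smul, add_smul]
        rw [hlhs, hrhs, _root_.map_smul] at hrb
        have hc : (μ + μk + lam) * (q ^ k - 1) = μ * (q ^ (k+1) - 1) := by
          rw [pow_succ]
          linear_combination hμkD - (q ^ k) * hμq
        by_cases hq1 : q ^ (k+1) = 1
        · exfalso
          have hczero : μ + μk + lam = 0 := by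
            rw [hq1, sub_self, mul_zero] at hc
            exact (mul_eq_zero.mp hc).resolve_right hD
          rw [hczero, zero_smul] at hrb
          exact hvpow (k+1) (by omega)
            ((smul_eq_zero.mp hrb).resolve_left (mul_ne_zero hμ0 hμk0))
        · refine ⟨hq1, ?_⟩
          have hD' : q ^ (k+1) - 1 ≠ 0 := sub_ne_zero.mpr hq1
          have hcne : μ + μk + lam ≠ 0 := by
            intro h
            rw [h, zero_mul] at hc
            exact hD' ((mul_eq_zero.mp hc.symm).resolve_left hμ0)
          have hstep : R (v ^ (k+1)) = ((μ + μk + lam)⁻¹ * (μ * μk)) • v ^ (k+1) := by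
            have h3 := congrArg (fun z => (μ + μk + lam)⁻¹ • z) hrb.symm
            simpa [smul_smul, inv_mul_cancel₀ hcne] using h3
          rw [hstep]
          congr 1
          rw [inv_mul_eq_div, div_eq_div_iff hcne hD']
          linear_combination (μ + μk + lam) * hμkD - μk * hc
  have hinj : Function.Injective (fun i : Fin (n+1) => lam / (q ^ (i.val+1) - 1)) := by
    intro a b hab
    simp only at hab
    have ha := (main (a.val+1) (by omega)).1
    have hb := (main (b.val+1) (by omega)).1
    have hDa : q ^ (a.val+1) - 1 ≠ 0 := sub_ne_zero.mpr ha
    have hDb : q ^ (b.val+1) - 1 ≠ 0 := sub_ne_zero.mpr hb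
    rw [div_eq_div_iff hDa hDb] at hab
    have hqq : q ^ (a.val+1) = q ^ (b.val+1) := by
      have h4 : lam * (q ^ (a.val+1)) = lam * (q ^ (b.val+1)) := by linear_combination -hab
      exact mul_left_cancel₀ hlam h4
    have haux : ∀ a b : ℕ, a < b → q ^ (a+1) = q ^ (b+1) → False := by
      intro a b hab2 hpow
      have h5 : q ^ (a+1) * q ^ (b-a) = q ^ (a+1) * 1 := by
        rw [mul_one, ← pow_add]
        have he : a + 1 + (b - a) = b + 1 := by omega
        rw [he, ← hpow]
      have := mul_left_cancel₀ (pow_ne_zero (a+1) hq0) h5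
      exact (main (b-a) (by omega)).1 this
    rcases lt_trichotomy a b with h | h | h
    · exact absurd hqq (fun hc => haux a.val b.val h hc)
    · exact h
    · exact absurd hqq.symm (fun hc => haux b.val a.val h hc)
  have hli := Module.End.eigenvectors_linearIndependent' R
      (fun i : Fin (n+1) => lam / (q ^ (i.val+1) - 1)) hinj
      (fun i => v ^ (i.val+1))
      (fun i => ⟨Module.End.mem_eigenspace_iff.mpr (main (i.val+1) (by omega)).2,
                 hvpow (i.val+1) (by omega)⟩)
  have hcard := hli.fintype_card_le_finrank
  rw [Module.finrank_fin_fun, Fintype.card_fin] at hcard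
  omega

/-- Over an algebraically closed field, an operator whose eigenvalues lie in `{0, -lam}`
satisfies `R^k (R+lam)^{n-k} = 0` for some `k ≤ n`. -/
private lemma minpoly_split {K : Type*} [Field K] [DecidableEq K] [IsAlgClosed K] {n : ℕ}
    (lam : K) (hlam : lam ≠ 0) (R : Module.End K (Fin n → K))
    (heig : ∀ μ : K, R.HasEigenvalue μ → μ = 0 ∨ μ = -lam) :
    ∃ k ≤ n, R ^ k * (R + lam • LinearMap.id) ^ (n - k) = 0 := by
  set p := minpoly K R with hp
  have hint : IsIntegral K R := Algebra.IsIntegral.isIntegral R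
  have hmon : p.Monic := minpoly.monic hint
  have hpne : p ≠ 0 := hmon.ne_zero
  have hroots : ∀ μ ∈ p.roots, μ = 0 ∨ μ = -lam := by
    intro μ hμ
    have : p.IsRoot μ := isRoot_of_mem_roots hμ
    exact heig μ (Module.End.hasEigenvalue_of_isRoot this)
  set a := p.roots.count 0 with ha
  set b := p.roots.count (-lam) with hb
  have hzne : (0 : K) ≠ -lam := fun h => hlam (by linear_combination h)
  have hroots_eq : p.roots = Multiset.replicate a 0 + Multiset.replicate b (-lam) := by
    ext μ
    rw [Multiset.count_add, Multiset.count_replicate, Multiset.count_replicate]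
    rcases eq_or_ne μ 0 with rfl | h0
    · simp only [if_pos rfl, if_true, if_neg (neg_ne_zero.mpr hlam : -lam ≠ (0:K)), add_zero]; rfl
    · rcases eq_or_ne μ (-lam) with rfl | h1
      · simp only [if_neg hzne, if_pos rfl, if_true, zero_add]; rfl
      · simp only [if_neg (Ne.symm h0), if_neg (Ne.symm h1), add_zero]
        rw [Multiset.count_eq_zero]
        intro hmem
        rcases hroots μ hmem with h | h
        · exact h0 h
        · exact h1 h
  have hsplit : p = X ^ a * (X + C lam) ^ b := by
    have := (IsAlgClosed.splits p).eq_prod_roots_of_monic hmon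
    rw [hroots_eq] at this
    simpa [Multiset.map_replicate, Multiset.prod_replicate, sub_neg_eq_add] using this
  have hdeg : a + b ≤ n := by
    have hdvd : p ∣ R.charpoly := LinearMap.minpoly_dvd_charpoly R
    have h1 : p.natDegree ≤ R.charpoly.natDegree :=
      Polynomial.natDegree_le_of_dvd hdvd (LinearMap.charpoly_monic R).ne_zero
    have h2 : R.charpoly.natDegree = n := by
      rw [LinearMap.charpoly_natDegree, Module.finrank_fin_fun]
    have h3 : p.natDegree = a + b := by
      rw [hsplit, Polynomial.natDegree_mul (pow_ne_zero _ X_ne_zero)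
        (pow_ne_zero _ (monic_X_add_C lam).ne_zero), natDegree_pow, natDegree_pow,
        natDegree_X, natDegree_X_add_C]
      ring
    omega
  refine ⟨a, by omega, ?_⟩
  have hdvd2 : p ∣ X ^ a * (X + C lam) ^ (n - a) := by
    rw [hsplit]
    exact mul_dvd_mul dvd_rfl (pow_dvd_pow _ (by omega))
  obtain ⟨c, hc⟩ := hdvd2
  rw [hp] at hc
  have h9 := congrArg (Polynomial.aeval R) hc
  rw [_root_.map_mul, _root_.map_mul, minpoly.aeval, zero_mul, _root_.map_pow, _root_.map_pow, aeval_X, _root_.map_add, aeval_X,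
    aeval_C, Module.algebraMap_end_eq_smul_id] at h9
  exact h9

/-- strict upper triangular all-ones operator -/
private def Tl (F : Type*) [Field F] (n : ℕ) : Module.End F (Fin n → F) :=
  (Matrix.of fun k i : Fin n => if k < i then (1:F) else 0).mulVecLin

/-- upper triangular (incl. diagonal) all-ones operator -/
private def Sl (F : Type*) [Field F] (n : ℕ) : Module.End F (Fin n → F) :=
  (Matrix.of fun k i : Fin n => if k ≤ i then (1:F) else 0).mulVecLin

private lemma tri_vec_props {F : Type*} [Field F] {n : ℕ} (hn : 1 ≤ n) :
    ∀ (m k : ℕ) (_ : m + k = n - 1),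
    ((Tl F n ^ m) (Pi.single ⟨n-1, by omega⟩ 1)) ⟨k, by omega⟩ = 1
    ∧ ∀ i : Fin n, k < i.val → ((Tl F n ^ m) (Pi.single ⟨n-1, by omega⟩ 1)) i = 0 := by
  intro m
  induction m with
  | zero =>
    intro k h
    simp only [pow_zero, Module.End.one_apply]
    constructor
    · have : (⟨k, by omega⟩ : Fin n) = ⟨n-1, by omega⟩ := by
        ext; simp; omega
      rw [this, Pi.single_eq_same]
    · intro i hi
      apply Pi.single_eq_of_ne
      intro hcon
      have := congrArg Fin.val hcon
      simp at this
      omega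
  | succ m ih =>
    intro k h
    have ih' := ih (k+1) (by omega)
    rw [pow_succ', Module.End.mul_apply]
    set w := (Tl F n ^ m) (Pi.single (⟨n-1, by omega⟩ : Fin n) 1) with hw
    have happ : ∀ v (i : Fin n), (Tl F n) v i = ∑ j, (if i < j then (1:F) else 0) * v j := by
      intro v i
      simp [Tl, Matrix.mulVecLin_apply, Matrix.mulVec, dotProduct]
    constructor
    · rw [happ]
      rw [Finset.sum_eq_single (⟨k+1, by omega⟩ : Fin n)]
      · rw [if_pos (by simp [Fin.lt_def]), one_mul]
        exact ih'.1
      · intro j _ hj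
        by_cases hlt : (⟨k, by omega⟩ : Fin n) < j
        · rw [ih'.2 j (by
            have h1 : k < j.val := hlt
            have h2 : j.val ≠ k+1 := by
              intro hcon
              apply hj; ext; simpa using hcon
            omega), mul_zero]
        · rw [if_neg hlt, zero_mul]
      · intro hcon
        exact absurd (Finset.mem_univ _) hcon
    · intro i hi
      rw [happ]
      apply Finset.sum_eq_zero
      intro j _
      by_cases hlt : i < j
      · rw [ih'.2 j (by
          have h1 : i.val < j.val := hlt
          omega), mul_zero]
      · rw [if_neg hlt, zero_mul]

private lemma suf_vec_props {F : Type*} [Field F] {n : ℕ} (k : ℕ) (hk : k < n) (w : Fin n → F)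
    (h1 : w ⟨k, hk⟩ = 1) (h0 : ∀ i : Fin n, k < i.val → w i = 0) :
    (Sl F n w) ⟨k, hk⟩ = 1 ∧ ∀ i : Fin n, k < i.val → (Sl F n w) i = 0 := by
  have happ : ∀ (i : Fin n), (Sl F n) w i = ∑ j, (if i ≤ j then (1:F) else 0) * w j := by
    intro i
    simp [Sl, Matrix.mulVecLin_apply, Matrix.mulVec, dotProduct]
  constructor
  · rw [happ]
    rw [Finset.sum_eq_single (⟨k, hk⟩ : Fin n)]
    · rw [if_pos le_rfl, one_mul, h1]
    · intro j _ hj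
      by_cases hle : (⟨k, hk⟩ : Fin n) ≤ j
      · rw [h0 j (by
          have h2 : k ≤ j.val := hle
          have h3 : j.val ≠ k := by
            intro hcon; apply hj; ext; simpa using hcon
          omega), mul_zero]
      · rw [if_neg hle, zero_mul]
    · intro hcon
      exact absurd (Finset.mem_univ _) hcon
  · intro i hi
    rw [happ]
    apply Finset.sum_eq_zero
    intro j _
    by_cases hle : i ≤ j
    · rw [h0 j (by
        have : i.val ≤ j.val := hle
        omega), mul_zero]
    · rw [if_neg hle, zero_mul]

/-- For a field `F`, nonzero `lam ∈ F` and `n ≥ 1`, the Rota–Baxter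
`lam`-index of `F^n` equals `n`: (i) every Rota–Baxter operator `R` of weight `lam` on
`F^n` satisfies `R^k ∘ (R + lam•id)^(n−k) = 0` for some `k ≤ n`, and (ii) some
Rota–Baxter operator `R` of weight `lam` satisfies
`R^k ∘ (R + lam•id)^((n−1)−k) ≠ 0` for every `k ≤ n−1`. -/
theorem rb_index_of_sum_of_fields
    {F : Type*} [Field F] (lam : F) (hlam : lam ≠ 0) (n : ℕ) (hn : 1 ≤ n) :
    (∀ R : (Fin n → F) →ₗ[F] (Fin n → F),
      (∀ x y : Fin n → F, R x * R y = R (R x * y + x * R y + lam • (x * y))) →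
      ∃ k ≤ n, R ^ k * (R + lam • LinearMap.id) ^ (n - k) = 0) ∧
    (∃ R : (Fin n → F) →ₗ[F] (Fin n → F),
      (∀ x y : Fin n → F, R x * R y = R (R x * y + x * R y + lam • (x * y))) ∧
      ∀ k ≤ n - 1, R ^ k * (R + lam • LinearMap.id) ^ ((n - 1) - k) ≠ 0) := by
  classical
  constructor
  · -- Part (i)
    intro R hR
    set A : Matrix (Fin n) (Fin n) F := LinearMap.toMatrixAlgEquiv' R with hA
    have hRA : Matrix.toLinAlgEquiv' A = R := Matrix.toLinAlgEquiv'_toMatrixAlgEquiv' R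
    have hAmul : ∀ x, A.mulVec x = R x := by
      intro x
      rw [← hRA, Matrix.toLinAlgEquiv'_apply]
    have hent := entries_of_rb lam A (by
      intro x y
      simp only [hAmul]
      exact hR x y)
    set K := AlgebraicClosure F with hK
    set φ : F →+* K := algebraMap F K with hφdef
    have hφ : Function.Injective φ := φ.injective
    set B : Matrix (Fin n) (Fin n) K := A.map φ with hB
    have hentK : ∀ i j k, B k i * B k j
        = B j i * B k j + B i j * B k i + (if i = j then φ lam * B k i else 0) := by
      intro i j k
      have h2 := congrArg φ (hent i j k)
      simpa [hB, Matrix.map_apply, _root_.map_add, _root_.map_mul, apply_ite φ, _root_.map_zero] using h2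
    have hRBK := rb_of_entries (φ lam) B hentK
    set R' : Module.End K (Fin n → K) := Matrix.toLinAlgEquiv' B with hR'
    have hRBK' : ∀ x y : Fin n → K, R' x * R' y = R' (R' x * y + x * R' y + φ lam • (x * y)) := by
      intro x y
      simp only [hR', Matrix.toLinAlgEquiv'_apply]
      exact hRBK x y
    have hlamK : φ lam ≠ 0 := fun hc => hlam (hφ (by simpa using hc))
    have heig : ∀ μ : K, R'.HasEigenvalue μ → μ = 0 ∨ μ = -(φ lam) :=
      fun μ hμ => eigen_mem (φ lam) hlamK R' hRBK' μ hμ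
    obtain ⟨k, hk, hzero⟩ := minpoly_split (φ lam) hlamK R' heig
    refine ⟨k, hk, ?_⟩
    -- transfer back to matrices over K
    have hmatK : B ^ k * (B + φ lam • 1) ^ (n - k) = 0 := by
      apply (Matrix.toLinAlgEquiv' (R := K)).injective
      rw [_root_.map_mul, _root_.map_pow, _root_.map_pow, _root_.map_add, _root_.map_smul,
        _root_.map_one, _root_.map_zero, ← hR']
      rw [← Module.End.one_eq_id] at hzero
      exact hzero
    -- transfer to matrices over F
    have hsmulone : φ.mapMatrix ((lam • 1 : Matrix (Fin n) (Fin n) F)) = φ lam • 1 := by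
      ext i j
      simp [Matrix.map_apply, Matrix.one_apply, apply_ite φ, mul_ite, mul_one, mul_zero]
    have hmatF : A ^ k * (A + lam • 1) ^ (n - k) = 0 := by
      have h5 : φ.mapMatrix (A ^ k * (A + lam • 1) ^ (n - k)) = 0 := by
        rw [_root_.map_mul, _root_.map_pow, _root_.map_pow, _root_.map_add, hsmulone]
        rw [RingHom.mapMatrix_apply, ← hB]
        exact hmatK
      ext i j
      have h6 := congrFun (congrFun (congrArg (fun M : Matrix (Fin n) (Fin n) K => (M : Matrix (Fin n) (Fin n) K)) h5) i) j
      have h7 : φ ((A ^ k * (A + lam • 1) ^ (n - k)) i j) = φ 0 := by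
        simpa [RingHom.mapMatrix_apply, Matrix.map_apply] using h6
      simpa using hφ h7
    -- back to linear maps over F
    have h8 := congrArg (Matrix.toLinAlgEquiv' (R := F)) hmatF
    rw [_root_.map_mul, _root_.map_pow, _root_.map_pow, _root_.map_add, _root_.map_smul,
      _root_.map_one, _root_.map_zero, hRA] at h8
    rw [← Module.End.one_eq_id]
    exact h8
  · -- Part (ii)
    set A : Matrix (Fin n) (Fin n) F := Matrix.of fun k i : Fin n => if k ≤ i then -lam else 0
      with hA
    set R : Module.End F (Fin n → F) := A.mulVecLin with hRdef
    have hent : ∀ i j k : Fin n, A k i * A k j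
        = A j i * A k j + A i j * A k i + (if i = j then lam * A k i else 0) := by
      intro i j k
      simp only [hA, Matrix.of_apply]
      rcases eq_or_ne i j with rfl | hij
      · rw [if_pos rfl, if_pos (le_refl i)]
        by_cases hki : k ≤ i
        · rw [if_pos hki]; ring
        · rw [if_neg hki]; ring
      · rw [if_neg hij]
        rcases le_or_gt i j with hle | hlt
        · have hij' : i < j := lt_of_le_of_ne hle (by exact fun hc => hij hc)
          rw [if_neg (not_le.mpr hij'), if_pos hij'.le]
          by_cases hki : k ≤ i
          · rw [if_pos hki, if_pos (hki.trans hij'.le)]; ring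
          · rw [if_neg hki]; ring
        · rw [if_pos hlt.le, if_neg (not_le.mpr hlt)]
          by_cases hkj : k ≤ j
          · rw [if_pos hkj, if_pos (hkj.trans hlt.le)]; ring
          · rw [if_neg hkj]; ring
    have hRS : R = (-lam) • Sl F n := by
      apply LinearMap.ext; intro x; funext i
      simp only [hRdef, hA, Sl, LinearMap.smul_apply, Pi.smul_apply, smul_eq_mul,
        Matrix.mulVecLin_apply, Matrix.mulVec, dotProduct, Matrix.of_apply, Finset.mul_sum]
      refine Finset.sum_congr rfl fun j _ => ?_
      split_ifs <;> ring
    have hNT : R + lam • LinearMap.id = (-lam) • Tl F n := by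
      apply LinearMap.ext; intro x; funext i
      simp only [hRdef, hA, Tl, LinearMap.add_apply, LinearMap.smul_apply, LinearMap.id_apply,
        Pi.add_apply, Pi.smul_apply, smul_eq_mul,
        Matrix.mulVecLin_apply, Matrix.mulVec, dotProduct, Matrix.of_apply, Finset.mul_sum]
      have step : ∀ j : Fin n, (if i ≤ j then -lam else 0) * x j
          = -lam * ((if i < j then (1:F) else 0) * x j) + (if j = i then -lam * x j else 0) := by
        intro j
        rcases eq_or_ne j i with rfl | hji
        · rw [if_pos rfl, if_pos le_rfl, if_neg (lt_irrefl _)]; ring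
        · rw [if_neg hji]
          by_cases hij : i ≤ j
          · have : i < j := lt_of_le_of_ne hij (fun hc => hji hc.symm)
            rw [if_pos hij, if_pos this]; ring
          · rw [if_neg hij, if_neg (fun hc : i < j => hij hc.le)]; ring
      rw [Finset.sum_congr rfl (fun j _ => step j), Finset.sum_add_distrib,
        Finset.sum_ite_eq' Finset.univ i (fun j => -lam * x j)]
      simp
    have hRB : ∀ x y : Fin n → F, R x * R y = R (R x * y + x * R y + lam • (x * y)) := by
      intro x y
      have h2 := rb_of_entries lam A hent x y
      simpa [hRdef, Matrix.mulVecLin_apply] using h2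
    refine ⟨R, hRB, ?_⟩
    intro k hk h0
    set e : Fin n → F := Pi.single (⟨n-1, by omega⟩ : Fin n) 1 with he
    have htri := tri_vec_props (F := F) hn (n-1-k) k (by omega)
    have key : ∀ j : ℕ, ((Sl F n ^ j) ((Tl F n ^ (n-1-k)) e)) ⟨k, by omega⟩ = 1
        ∧ ∀ i : Fin n, k < i.val → ((Sl F n ^ j) ((Tl F n ^ (n-1-k)) e)) i = 0 := by
      intro j
      induction j with
      | zero => simpa using htri
      | succ j ih =>
        rw [pow_succ', Module.End.mul_apply]
        exact suf_vec_props k (by omega) _ ih.1 ih.2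
    have hsm : R ^ k * (R + lam • LinearMap.id) ^ ((n-1)-k)
        = ((-lam) ^ (n-1)) • (Sl F n ^ k * Tl F n ^ ((n-1)-k)) := by
      rw [hNT, hRS, _root_.smul_pow, _root_.smul_pow, smul_mul_assoc, mul_smul_comm, smul_smul, ← pow_add]
      have hkk : k + ((n-1)-k) = n - 1 := by omega
      rw [hkk]
    have heval := congrFun (LinearMap.congr_fun h0 e) (⟨k, by omega⟩ : Fin n)
    simp only [LinearMap.zero_apply, Pi.zero_apply] at heval
    rw [hsm] at heval
    simp only [LinearMap.smul_apply, Module.End.mul_apply, Pi.smul_apply, smul_eq_mul] at heval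
    rw [(key k).1, mul_one] at heval
    exact pow_ne_zero _ (neg_ne_zero.mpr hlam) heval
end

section
/- Let F be a field of characteristic zero, let A be a unital finite-dimensional (not necessarily associative) F-algebra, and let R be a Rota–Baxter operator of weight 0 on A. Define the derived products by x∘₀y = xy and x∘_{i+1}y = R(x)∘_i y + x∘_i R(y). Then x∘_k y = Σ_{i=0}^{k} C(k,i) · R^i(x)·R^{k−i}(y) for all k, and there exists a natural number N such that for every k ≥ N and all x, y ∈ A, Σ_{i=0}^{k} C(k,i) · R^i(x)·R^{k−i}(y) = 0; that is, the limiting derived algebra A_∞ has trivial (zero) product. -/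
open LinearMap Module Polynomial Set

section Aux

variable {K V : Type*} [Field K] [AddCommGroup V] [Module K V] [FiniteDimensional K V]

private lemma trace_pow_restrict_maxGenEigenspace (f : Module.End K V) (μ : K) (n : ℕ)
    (h : MapsTo (f ^ n) (f.maxGenEigenspace μ) (f.maxGenEigenspace μ)) :
    trace K _ ((f ^ n).restrict h)
      = μ ^ n * (finrank K (f.maxGenEigenspace μ) : K) := by
  have hf : MapsTo f (f.maxGenEigenspace μ) (f.maxGenEigenspace μ) :=
    Module.End.mapsTo_maxGenEigenspace_of_comm rfl μ
  set p := f.maxGenEigenspace μ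
  set g : Module.End K p := f.restrict hf with hg
  have hres : (f ^ n).restrict h = g ^ n := by
    rw [hg]
    exact (Module.End.pow_restrict n hf h).symm
  set c : Module.End K p := algebraMap K (Module.End K p) μ with hcdef
  have hnil : IsNilpotent (g - c) := by
    have h2 := f.isNilpotent_restrict_maxGenEigenspace_sub_algebraMap μ
    convert h2 using 1
    ext x
    simp [hg, hcdef]
    rfl
  have hcomm : Commute g c := (Algebra.commutes μ g).symm
  have hnil2 : IsNilpotent (g ^ n - c ^ n) := by
    rw [← Commute.geom_sum₂_mul hcomm n]
    refine Commute.isNilpotent_mul_left ?_ hnil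
    refine Commute.sum_left _ _ _ fun i _ => ?_
    exact (((Commute.refl g).sub_right hcomm).pow_left i).mul_left
      ((hcomm.symm.sub_right (Commute.refl c)).pow_left _)
  have htr0 : trace K p (g ^ n - c ^ n) = 0 := by
    have := LinearMap.isNilpotent_trace_of_isNilpotent hnil2
    rwa [isNilpotent_iff_eq_zero] at this
  have hcn : trace K p (c ^ n) = μ ^ n * (finrank K p : K) := by
    rw [hcdef, ← map_pow, Module.algebraMap_end_eq_smul_id]
    rw [map_smul, smul_eq_mul]
    congr 1
    exact LinearMap.trace_id K p
  calc trace K p ((f ^ n).restrict h) = trace K p (c ^ n + (g ^ n - c ^ n)) := by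
        rw [hres, add_sub_cancel]
      _ = μ ^ n * (finrank K p : K) := by rw [map_add, htr0, hcn, add_zero]

end Aux

section Aux2

variable {K V : Type*} [Field K] [CharZero K] [IsAlgClosed K]
  [AddCommGroup V] [Module K V] [FiniteDimensional K V]

private lemma isNilpotent_of_trace_pow_eq_zero (f : Module.End K V)
    (htr : ∀ n : ℕ, trace K V (f ^ (n + 2)) = 0) : IsNilpotent f := by
  classical
  have hsup : ⨆ μ, f.maxGenEigenspace μ = ⊤ := Module.End.iSup_maxGenEigenspace_eq_top f
  have hind := f.independent_maxGenEigenspace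
  have h_fin : {μ | f.maxGenEigenspace μ ≠ ⊥}.Finite :=
    WellFoundedGT.finite_ne_bot_of_iSupIndep hind
  have hds := DirectSum.isInternal_submodule_of_iSupIndep_of_iSup_eq_top hind hsup
  set s := h_fin.toFinset with hs
  set d : K → K := fun μ => (finrank K (f.maxGenEigenspace μ) : K) with hd
  have hmap : ∀ (n : ℕ) (μ : K),
      MapsTo (f ^ n) (f.maxGenEigenspace μ) (f.maxGenEigenspace μ) :=
    fun n μ => Module.End.mapsTo_maxGenEigenspace_of_comm ((Commute.refl f).pow_right n) μ
  have htrace : ∀ n : ℕ, trace K V (f ^ n) = ∑ μ ∈ s, μ ^ n * d μ := by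
    intro n
    rw [trace_eq_sum_trace_restrict' hds h_fin (hmap n)]
    exact Finset.sum_congr rfl fun μ _ => trace_pow_restrict_maxGenEigenspace f μ n _
  have hzero : ∀ μ ∈ s, μ = 0 := by
    intro μ₀ hμ₀
    by_contra hne
    set t : Polynomial K := ∏ ν ∈ s.erase μ₀, (X - C ν) with ht
    have key : ∑ μ ∈ s, μ ^ 2 * t.eval μ * d μ = 0 := by
      have expand : ∀ μ ∈ s, μ ^ 2 * t.eval μ * d μ
          = ∑ j ∈ Finset.range (t.natDegree + 1), t.coeff j * (μ ^ (j + 2) * d μ) := by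
        intro μ _
        rw [Polynomial.eval_eq_sum_range, Finset.mul_sum, Finset.sum_mul]
        exact Finset.sum_congr rfl fun j _ => by ring
      rw [Finset.sum_congr rfl expand, Finset.sum_comm]
      refine Finset.sum_eq_zero fun j _ => ?_
      rw [← Finset.mul_sum, ← htrace (j + 2), htr j, mul_zero]
    have key2 : ∑ μ ∈ s, μ ^ 2 * t.eval μ * d μ = μ₀ ^ 2 * t.eval μ₀ * d μ₀ := by
      refine Finset.sum_eq_single_of_mem μ₀ hμ₀ fun ν hν hne' => ?_
      have : t.eval ν = 0 := by
        rw [ht, Polynomial.eval_prod]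
        exact Finset.prod_eq_zero (Finset.mem_erase.mpr ⟨hne', hν⟩) (by simp)
      rw [this, mul_zero, zero_mul]
    rw [key] at key2
    have h1 : μ₀ ^ 2 ≠ 0 := pow_ne_zero _ hne
    have h2 : t.eval μ₀ ≠ 0 := by
      rw [ht, Polynomial.eval_prod]
      refine Finset.prod_ne_zero_iff.mpr fun ν hν => ?_
      simp only [eval_sub, eval_X, eval_C]
      exact sub_ne_zero.mpr (Ne.symm (Finset.mem_erase.mp hν).1)
    have h3 : d μ₀ ≠ 0 := by
      rw [hd]
      have hbot : f.maxGenEigenspace μ₀ ≠ ⊥ := by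
        simpa [hs] using hμ₀
      have : Nontrivial (f.maxGenEigenspace μ₀) :=
        Submodule.nontrivial_iff_ne_bot.mpr hbot
      exact Nat.cast_ne_zero.mpr Module.finrank_pos.ne'
    exact (mul_ne_zero (mul_ne_zero h1 h2) h3) key2.symm
  have htop : f.maxGenEigenspace 0 = ⊤ := by
    rw [← hsup]
    refine le_antisymm (le_iSup _ 0) (iSup_le fun μ => ?_)
    rcases eq_or_ne (f.maxGenEigenspace μ) ⊥ with h | h
    · simp [h]
    · have : μ = 0 := hzero μ (by simpa [hs] using h)
      rw [this]
  rw [LinearMap.isNilpotent_iff_charpoly, LinearMap.charpoly_eq_X_pow_iff]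
  intro m
  have hm : m ∈ f.maxGenEigenspace 0 := htop ▸ Submodule.mem_top
  rw [Module.End.mem_maxGenEigenspace] at hm
  obtain ⟨k, hk⟩ := hm
  exact ⟨k, by simpa using hk⟩

end Aux2

private lemma trace_matrix_map {n : Type*} [Fintype n] {R S : Type*} [CommRing R] [CommRing S]
    (f : R →+* S) (M : Matrix n n R) : (M.map f).trace = f M.trace := by
  simp [Matrix.trace, Matrix.map_apply, map_sum, Matrix.diag]

private lemma isNilpotent_of_trace_pow_eq_zero_charZero
    {F A : Type*} [Field F] [CharZero F] [AddCommGroup A] [Module F A] [FiniteDimensional F A]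
    (f : Module.End F A) (htr : ∀ n : ℕ, trace F A (f ^ (n + 2)) = 0) : IsNilpotent f := by
  classical
  set K := AlgebraicClosure F
  set n := finrank F A with hn
  set b : Basis (Fin n) F A := Module.finBasis F A with hb
  set e := LinearMap.toMatrixAlgEquiv b with he
  set φ := (algebraMap F K).mapMatrix (m := Fin n) with hφ
  set e₂ := Matrix.toLinAlgEquiv' (R := K) (n := Fin n) with he₂
  set g : Module.End K (Fin n → K) := e₂ (φ (e f)) with hg
  have key : ∀ m : ℕ, trace K (Fin n → K) (g ^ m) = algebraMap F K (trace F A (f ^ m)) := by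
    intro m
    have h1 : g ^ m = e₂ (φ (e (f ^ m))) := by
      rw [hg, ← map_pow, ← map_pow, ← map_pow]
    rw [h1, LinearMap.trace_eq_matrix_trace K (Pi.basisFun K (Fin n)),
      LinearMap.toMatrix_eq_toMatrix']
    have h2 : LinearMap.toMatrix' (e₂ (φ (e (f ^ m)))) = φ (e (f ^ m)) :=
      LinearMap.toMatrix'_toLin' _
    rw [h2, hφ, RingHom.mapMatrix_apply, trace_matrix_map]
    congr 1
    rw [LinearMap.trace_eq_matrix_trace F b, he]
    rfl
  have htr' : ∀ m : ℕ, trace K (Fin n → K) (g ^ (m + 2)) = 0 := by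
    intro m; rw [key, htr, map_zero]
  obtain ⟨N, hN⟩ := isNilpotent_of_trace_pow_eq_zero g htr'
  refine ⟨N, ?_⟩
  have hg' : g ^ N = e₂ (φ (e (f ^ N))) := by rw [hg, ← map_pow, ← map_pow, ← map_pow]
  have hM0 : φ (e (f ^ N)) = 0 := by
    apply e₂.injective
    rw [map_zero, ← hg', hN]
  have hMF : e (f ^ N) = 0 := by
    ext i j
    have h3 := congrFun (congrFun hM0 i) j
    simp only [hφ, RingHom.mapMatrix_apply, Matrix.map_apply, Matrix.zero_apply] at h3 ⊢
    exact (map_eq_zero_iff _ (algebraMap F K).injective).mp h3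
  exact e.injective (by rw [hMF, map_zero])

section RBtr
variable {F : Type*} [Field F]
    {A : Type*} [NonAssocRing A] [Module F A] [SMulCommClass F A A] [IsScalarTower F A A]

set_option linter.unusedSectionVars false in
private lemma rb_trace_pow (R : A →ₗ[F] A)
    (hR : ∀ x y : A, R x * R y = R (R x * y + x * R y)) (n : ℕ) :
    trace F A (R ^ (n + 2)) = 0 := by
  set L : A →ₗ[F] A := LinearMap.mulLeft F (R 1) with hL
  have hc : R * R = L * R - R * L := by
    ext x
    have h := hR 1 x
    rw [one_mul, map_add] at h
    simp only [Module.End.mul_apply, LinearMap.sub_apply, hL, LinearMap.mulLeft_apply]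
    rw [eq_sub_iff_add_eq, add_comm, ← h]
  have h1 : R ^ (n + 2) = R ^ n * L * R - R ^ (n + 1) * L := by
    have : R ^ (n + 2) = R ^ n * (R * R) := by rw [pow_add, pow_two]
    rw [this, hc, mul_sub, ← mul_assoc, ← mul_assoc, pow_succ]
  rw [h1, map_sub, LinearMap.trace_mul_comm F (R ^ n * L) R, ← mul_assoc, ← pow_succ']
  exact sub_self _
end RBtr

/-- The derived products `x∘₀y = xy`, `x∘_{i+1}y = R(x)∘_i y + x∘_i R(y)` associated with
an operator `R` of weight `0` on a (not necessarily associative) algebra `A`. -/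
def derivedMul {F : Type*} [Field F] {A : Type*} [NonAssocRing A] [Module F A]
    (R : A →ₗ[F] A) : ℕ → A → A → A
  | 0, x, y => x * y
  | (i + 1), x, y => derivedMul R i (R x) y + derivedMul R i x (R y)

private lemma derivedMul_eq_sum {F : Type*} [Field F] {A : Type*} [NonAssocRing A] [Module F A]
    [SMulCommClass F A A] (R : A →ₗ[F] A) :
    ∀ (k : ℕ) (x y : A), derivedMul R k x y
      = ∑ i ∈ Finset.range (k + 1), ((Nat.choose k i : F)) • ((R ^ i) x * (R ^ (k - i)) y) := by
  intro k
  induction k with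
  | zero => intro x y; simp [derivedMul]
  | succ k ih =>
    intro x y
    set u : ℕ → A := fun j => (R ^ j) x * (R ^ (k + 1 - j)) y with hu
    have hs1 : derivedMul R k (R x) y
        = ∑ i ∈ Finset.range (k + 1), ((Nat.choose k i : F)) • u (i + 1) := by
      rw [ih]
      refine Finset.sum_congr rfl fun i hi => ?_
      simp only [hu, Nat.succ_sub_succ, pow_succ, Module.End.mul_apply]
    have hs2 : derivedMul R k x (R y)
        = ∑ i ∈ Finset.range (k + 1), ((Nat.choose k i : F)) • u i := by
      rw [ih]
      refine Finset.sum_congr rfl fun i hi => ?_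
      have hik : i ≤ k := Nat.lt_succ_iff.mp (Finset.mem_range.mp hi)
      have h3 : k + 1 - i = (k - i) + 1 := by omega
      simp only [hu, h3, pow_succ, Module.End.mul_apply]
    show derivedMul R k (R x) y + derivedMul R k x (R y) = _
    rw [hs1, hs2]
    have hrhs : ∑ i ∈ Finset.range (k + 2), ((Nat.choose (k + 1) i : F)) • u i
        = (∑ i ∈ Finset.range (k + 1), ((Nat.choose (k + 1) (i + 1) : F)) • u (i + 1))
          + u 0 := by
      rw [Finset.sum_range_succ' (fun i => ((Nat.choose (k + 1) i : F)) • u i) (k + 1)]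
      simp
    rw [hrhs]
    have hsplit : ∀ i, ((Nat.choose (k + 1) (i + 1) : F)) • u (i + 1)
        = ((Nat.choose k i : F)) • u (i + 1) + ((Nat.choose k (i + 1) : F)) • u (i + 1) := by
      intro i
      rw [Nat.choose_succ_succ, Nat.cast_add, add_smul]
    simp_rw [hsplit]
    rw [Finset.sum_add_distrib]
    have h2 : ∑ i ∈ Finset.range (k + 1), ((Nat.choose k (i + 1) : F)) • u (i + 1) + u 0
        = ∑ i ∈ Finset.range (k + 1), ((Nat.choose k i : F)) • u i := by
      rw [Finset.sum_range_succ (fun i => ((Nat.choose k (i + 1) : F)) • u (i + 1)) k,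
        Finset.sum_range_succ' (fun i => ((Nat.choose k i : F)) • u i) k]
      simp [Nat.choose_succ_self]
    rw [add_assoc, h2]

/-- For a unital finite-dimensional (not necessarily associative) algebra
`A` over a field `F` of characteristic zero and a Rota–Baxter operator `R` of weight `0`
on `A`, the derived products satisfy `x∘_k y = Σ_{i=0}^k C(k,i) R^i(x) R^{k−i}(y)`, and
there is `N` such that this product vanishes identically for all `k ≥ N`; that is, the
limiting derived algebra `A_∞` has trivial product. -/
theorem rb_derived_algebra_weight_zero_trivial
    {F : Type*} [Field F] [CharZero F]
    {A : Type*} [NonAssocRing A] [Module F A] [SMulCommClass F A A] [IsScalarTower F A A]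
    [FiniteDimensional F A]
    (R : A →ₗ[F] A)
    (hR : ∀ x y : A, R x * R y = R (R x * y + x * R y)) :
    (∀ (k : ℕ) (x y : A),
      derivedMul R k x y
        = ∑ i ∈ Finset.range (k + 1),
            ((Nat.choose k i : F)) • ((R ^ i) x * (R ^ (k - i)) y)) ∧
    (∃ N : ℕ, ∀ k ≥ N, ∀ x y : A,
      ∑ i ∈ Finset.range (k + 1),
          ((Nat.choose k i : F)) • ((R ^ i) x * (R ^ (k - i)) y) = 0) := by
  constructor
  · exact derivedMul_eq_sum R
  · obtain ⟨N, hN⟩ := isNilpotent_of_trace_pow_eq_zero_charZero R (rb_trace_pow R hR)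
    have hzero : ∀ m, N ≤ m → ∀ z : A, (R ^ m) z = 0 := by
      intro m hm z
      have : R ^ m = R ^ (m - N) * R ^ N := by
        rw [← pow_add]
        congr 1
        omega
      rw [this, Module.End.mul_apply, hN]
      simp
    refine ⟨N + N, fun k hk x y => Finset.sum_eq_zero fun i hi => ?_⟩
    rcases le_or_gt N i with h | h
    · rw [hzero i h x, zero_mul, smul_zero]
    · have : N ≤ k - i := by omega
      rw [hzero (k - i) this y, mul_zero, smul_zero]
end
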